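/- For any permutation p of length n, the number of distinct (n−1)-patterns of p equals n − C(p), where C(p) is the number of bonds of p. -/

import Mathlib

open Finset

/-- `del p i`: delete the `i`-th entry of `p` and relabel order-isomorphically. -/
def del {n : ℕ} (p : Equiv.Perm (Fin (n + 1))) (i : Fin (n + 1)) : Equiv.Perm (Fin n) :=
  (Tuple.sort fun j => p (i.succAbove j))⁻¹

/-- `D1 p`: the set of `(n-1)`-patterns of `p`. -/
def D1 {n : ℕ} (p : Equiv.Perm (Fin (n + 1))) : Finset (Equiv.Perm (Fin n)) :=
  Finset.univ.image (del p)

/-- `ins q j k`: insert the value `k - 1/2` just left of position `j` and relabel. -/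
def ins {n : ℕ} (q : Equiv.Perm (Fin n)) (j k : Fin (n + 1)) : Equiv.Perm (Fin (n + 1)) :=
  (finSuccEquiv' j).trans ((Equiv.optionCongr q).trans (finSuccEquiv' k).symm)

/-- `C p`: the number of bonds of `p` (adjacent positions with values differing by 1). -/
def C {n : ℕ} (p : Equiv.Perm (Fin (n + 1))) : ℕ :=
  (Finset.univ.filter fun i : Fin n =>
    Nat.dist (p i.castSucc).val (p i.succ).val = 1).card

/-- minimum gap of an injective word `f`, via the taxicab metric on (index, value). -/
noncomputable def mgF {n : ℕ} (f : Fin n → ℕ) : ℕ :=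
  sInf {m : ℕ | ∃ i j : Fin n, i < j ∧ Nat.dist i.val j.val + Nat.dist (f i) (f j) = m}

/-- minimum gap of a permutation. -/
noncomputable def mg {n : ℕ} (p : Equiv.Perm (Fin n)) : ℕ := mgF fun i => (p i).val

/-- the span of entries `p i` and `p j`: indices of entries strictly between them
horizontally or vertically. -/
def span {n : ℕ} (p : Equiv.Perm (Fin n)) (i j : Fin n) : Finset (Fin n) :=
  Finset.univ.filter fun m =>
    (i < m ∧ m < j) ∨ (min (p i) (p j) < p m ∧ p m < max (p i) (p j))

/-- the pattern of `p` after deleting the entries at positions in `S`, encoded as the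
list of (0-based) ranks of the remaining entries in positional order. -/
def patList {n : ℕ} (p : Equiv.Perm (Fin n)) (S : Finset (Fin n)) : List ℕ :=
  let l := (Sᶜ.sort (· ≤ ·)).map fun t => (p t).val
  l.map fun v => (l.filter fun w => w < v).length

/-- `Dk p k`: the set of distinct `(n-k)`-patterns of `p`. -/
def Dk {n : ℕ} (p : Equiv.Perm (Fin n)) (k : ℕ) : Finset (List ℕ) :=
  (Finset.univ.filter fun S : Finset (Fin n) => S.card = k).image (patList p)

lemma val_succAbove {n : ℕ} (u : Fin (n+1)) (k : Fin n) :
    (u.succAbove k).val = if k.val < u.val then k.val else k.val + 1 := by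
  rcases lt_or_ge (Fin.castSucc k) u with h | h
  · rw [Fin.succAbove_of_castSucc_lt _ _ h, Fin.coe_castSucc,
      if_pos (by simpa [Fin.lt_def] using h)]
  · rw [Fin.succAbove_of_le_castSucc _ _ h, Fin.val_succ, if_neg]
    simpa [Fin.le_def, not_lt] using h

lemma del_key {n : ℕ} (p : Equiv.Perm (Fin (n + 1))) (i : Fin (n + 1)) (j : Fin n) :
    (p i).succAbove (del p i j) = p (i.succAbove j) := by
  set f : Fin n → Fin (n+1) := fun j => p (i.succAbove j) with hf
  have hinj : Function.Injective f := fun a b hab => by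
    exact Fin.succAbove_right_injective (p.injective hab)
  have hmono : StrictMono (f ∘ Tuple.sort f) :=
    (Tuple.monotone_sort f).strictMono_of_injective
      (hinj.comp (Tuple.sort f).injective)
  have hrange : Set.range (f ∘ Tuple.sort f) = Set.range (p i).succAbove := by
    rw [Function.comp_def]
    have h1 : Set.range (fun x => f ((Tuple.sort f) x)) = Set.range f := by
      exact (Tuple.sort f).surjective.range_comp f
    rw [h1, Fin.range_succAbove, hf]
    have h2 : Set.range (fun j => p (i.succAbove j)) = p '' Set.range i.succAbove :=
      (Set.range_comp p i.succAbove)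
    rw [h2, Fin.range_succAbove, Set.image_compl_eq p.bijective, Set.image_singleton]
  haveI : WellFoundedLT (Fin n) := inferInstance
  have heq : f ∘ Tuple.sort f = (p i).succAbove := by
    rw [← StrictMono.range_inj hmono (Fin.strictMono_succAbove (p i))]
    exact hrange
  have h3 : (p i).succAbove (del p i j) = (f ∘ Tuple.sort f) ((Tuple.sort f)⁻¹ j) := by
    rw [heq]; rfl
  rw [h3]
  simp [f]

lemma pinj_val {n : ℕ} (p : Equiv.Perm (Fin (n+1))) {x y : Fin (n+1)} (h : x.val ≠ y.val) :
    (p x).val ≠ (p y).val := fun hh => h (congrArg Fin.val (p.injective (Fin.ext hh)))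

lemma succAbove_switch {n : ℕ} {u v w : Fin (n+1)} {k : Fin n}
    (hd : Nat.dist u.val v.val = 1) (hw1 : w.val ≠ u.val) (hw2 : w.val ≠ v.val)
    (h : u.succAbove k = w) : v.succAbove k = w := by
  have h1 := val_succAbove u k
  have h2 := val_succAbove v k
  rw [h] at h1
  apply Fin.ext
  rw [h2]
  simp only [Nat.dist] at hd
  split_ifs at h1 ⊢ <;> omega

lemma succAbove_swap {n : ℕ} {u v : Fin (n+1)} {k : Fin n}
    (hd : Nat.dist u.val v.val = 1) (h : u.succAbove k = v) : v.succAbove k = u := by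
  have h1 := val_succAbove u k
  have h2 := val_succAbove v k
  rw [h] at h1
  apply Fin.ext
  rw [h2]
  simp only [Nat.dist] at hd
  split_ifs at h1 ⊢ <;> omega

lemma bond_imp {n : ℕ} (p : Equiv.Perm (Fin (n + 1))) (i : Fin n)
    (hb : Nat.dist (p i.castSucc).val (p i.succ).val = 1) :
    del p i.castSucc = del p i.succ := by
  apply Equiv.ext
  intro j
  apply Fin.succAbove_right_injective (p := p i.succ)
  rw [del_key p i.succ j]
  have e1 := del_key p i.castSucc j
  rcases lt_trichotomy j i with hj | hji | hj
  case inr.inl =>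
    subst hji
    have ha : j.castSucc.succAbove j = j.succ :=
      Fin.succAbove_of_le_castSucc _ _ le_rfl
    have hb' : j.succ.succAbove j = j.castSucc :=
      Fin.succAbove_of_castSucc_lt _ _ (Fin.castSucc_lt_succ : j.castSucc < j.succ)
    rw [ha] at e1; rw [hb']
    exact succAbove_swap hb e1
  · have ha : i.castSucc.succAbove j = j.castSucc :=
      Fin.succAbove_of_castSucc_lt _ _ (by rw [Fin.lt_def]; simp only [Fin.coe_castSucc]; exact Fin.lt_def.mp hj)
    have hb' : i.succ.succAbove j = j.castSucc :=
      Fin.succAbove_of_castSucc_lt _ _ (by rw [Fin.lt_def]; simp only [Fin.coe_castSucc, Fin.val_succ]; have := Fin.lt_def.mp hj; omega)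
    rw [ha] at e1; rw [hb']
    refine succAbove_switch hb ?_ ?_ e1
    · exact pinj_val p (by have := Fin.lt_def.mp hj; simp only [Fin.coe_castSucc, Fin.val_succ]; omega)
    · exact pinj_val p (by have := Fin.lt_def.mp hj; simp only [Fin.coe_castSucc, Fin.val_succ]; omega)
  · have ha : i.castSucc.succAbove j = j.succ :=
      Fin.succAbove_of_le_castSucc _ _ (by rw [Fin.le_def]; simp only [Fin.coe_castSucc, Fin.val_succ]; have := Fin.lt_def.mp hj; omega)
    have hb' : i.succ.succAbove j = j.succ :=
      Fin.succAbove_of_le_castSucc _ _ (by rw [Fin.le_def]; simp only [Fin.coe_castSucc, Fin.val_succ]; have := Fin.lt_def.mp hj; omega)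
    rw [ha] at e1; rw [hb']
    refine succAbove_switch hb ?_ ?_ e1
    · exact pinj_val p (by have := Fin.lt_def.mp hj; simp only [Fin.coe_castSucc, Fin.val_succ]; omega)
    · exact pinj_val p (by have := Fin.lt_def.mp hj; simp only [Fin.coe_castSucc, Fin.val_succ]; omega)

lemma del_bond {n : ℕ} (p : Equiv.Perm (Fin (n + 1))) {a b : Fin (n+1)} (hab : a < b)
    (h : del p a = del p b) (j : Fin n) (h1 : a ≤ j.castSucc) (h2 : j.succ ≤ b) :
    Nat.dist (p j.castSucc).val (p j.succ).val = 1 := by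
  have ha : a.succAbove j = j.succ := Fin.succAbove_of_le_castSucc _ _ h1
  have hb' : b.succAbove j = j.castSucc :=
    Fin.succAbove_of_castSucc_lt _ _ (lt_of_lt_of_le (Fin.castSucc_lt_succ : j.castSucc < j.succ) h2)
  have e1 := del_key p a j
  have e2 := del_key p b j
  rw [ha] at e1
  rw [hb', ← h] at e2
  have v1 := val_succAbove (p a) (del p a j)
  have v2 := val_succAbove (p b) (del p a j)
  rw [e1] at v1; rw [e2] at v2
  have hxy : (p j.castSucc).val ≠ (p j.succ).val :=
    pinj_val p (by simp only [Fin.coe_castSucc, Fin.val_succ]; omega)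
  simp only [Nat.dist]
  split_ifs at v1 v2 <;> omega

theorem stmt1 {n : ℕ} (p : Equiv.Perm (Fin (n + 1))) :
    (D1 p).card = (n + 1) - C p := by
  classical
  set P : Fin (n + 1) → Prop := fun i =>
    ∀ h : i.val < n, Nat.dist (p (Fin.castSucc ⟨i.val, h⟩)).val
      (p (Fin.succ ⟨i.val, h⟩)).val ≠ 1 with hP
  set L : Finset (Fin (n + 1)) := Finset.univ.filter P with hL
  -- the complement of L has cardinality C p
  have hcompl : C p = (Finset.univ.filter fun i => ¬ P i).card := by
    rw [C]
    apply Finset.card_bij (fun (a : Fin n) _ => a.castSucc)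
    · intro a ha
      simp only [Finset.mem_filter, Finset.mem_univ, true_and] at ha ⊢
      intro hp
      exact hp a.isLt (by simpa using ha)
    · intro a _ b _ hab
      exact Fin.castSucc_injective n hab
    · intro b hb
      simp only [Finset.mem_filter, Finset.mem_univ, true_and, hP] at hb
      push_neg at hb
      obtain ⟨h, hd⟩ := hb
      exact ⟨⟨b.val, h⟩, by simpa using hd, Fin.ext rfl⟩
  -- cardinality of L
  have hLcard : L.card = (n + 1) - C p := by
    have := Finset.card_filter_add_card_filter_not (s := Finset.univ) (p := P)
    simp only [Finset.card_univ, Fintype.card_fin] at this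
    rw [hL]
    omega
  -- every deletion pattern is achieved by some element of L
  have hreach : ∀ m (i : Fin (n + 1)), n - i.val ≤ m → ∃ j, P j ∧ del p j = del p i := by
    intro m
    induction m with
    | zero =>
      intro i hi
      refine ⟨i, fun h => absurd h (by omega), rfl⟩
    | succ m ih =>
      intro i hi
      by_cases hPi : P i
      · exact ⟨i, hPi, rfl⟩
      · rw [hP] at hPi
        simp only [not_forall, ne_eq, not_not] at hPi
        obtain ⟨h, hd⟩ := hPi
        have hdel : del p i = del p (Fin.succ ⟨i.val, h⟩) := by
          have := bond_imp p ⟨i.val, h⟩ hd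
          rwa [show Fin.castSucc ⟨i.val, h⟩ = i from Fin.ext rfl] at this
        obtain ⟨j, hj1, hj2⟩ := ih (Fin.succ ⟨i.val, h⟩) (by simp [Fin.val_succ]; omega)
        exact ⟨j, hj1, hj2.trans hdel.symm⟩
  -- del is injective on L
  have hinj : Set.InjOn (del p) L := by
    have key : ∀ a b : Fin (n + 1), a < b → P a → del p a = del p b → False := by
      intro a b hab hPa hd
      have han : a.val < n := by
        have := Fin.lt_def.mp hab
        have := b.isLt
        omega
      refine hPa han (del_bond p hab hd ⟨a.val, han⟩ ?_ ?_)
      · exact le_of_eq (Fin.ext rfl).symm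
      · rw [Fin.le_def]
        simp only [Fin.val_succ]
        exact Fin.lt_def.mp hab
    intro a ha b hb hab
    simp only [hL, Finset.coe_filter, Set.mem_setOf_eq, Finset.mem_univ, true_and] at ha hb
    by_contra hne
    rcases lt_or_gt_of_ne hne with h | h
    · exact key a b h ha hab
    · exact key b a h hb hab.symm
  -- D1 p is the image of L
  have himg : D1 p = L.image (del p) := by
    apply Finset.Subset.antisymm
    · intro q hq
      rw [D1, Finset.mem_image] at hq
      obtain ⟨i, _, rfl⟩ := hq
      obtain ⟨j, hj1, hj2⟩ := hreach (n - i.val) i le_rfl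
      rw [Finset.mem_image]
      exact ⟨j, by simp only [hL, Finset.mem_filter, Finset.mem_univ, true_and]; exact hj1, hj2⟩
    · intro q hq
      rw [Finset.mem_image] at hq
      obtain ⟨j, _, rfl⟩ := hq
      rw [D1, Finset.mem_image]
      exact ⟨j, Finset.mem_univ j, rfl⟩
  rw [himg, Finset.card_image_of_injOn hinj, hLcard]
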